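/- For the rotational surface of spherical type X, for all t ∈ I and θ ∈ ℝ: ⟨X(t,θ), X(t,θ)⟩_L = −1 and the first component of X(t,θ) is positive (so X takes values in H³); moreover ⟨∂X/∂t, ∂X/∂t⟩_L = 1 (t is hyperbolic arc length), ⟨∂X/∂t, ∂X/∂θ⟩_L = 0, and ⟨∂X/∂θ, ∂X/∂θ⟩_L = x₁(t)², i.e., the induced first fundamental form is diag(1, x₁²). -/

import Mathlib

open Set

/-- The Lorentzian inner product on `ℝ⁴`. -/
noncomputable def lor (p q : ℝ × ℝ × ℝ × ℝ) : ℝ :=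
  -(p.1 * q.1) + p.2.1 * q.2.1 + p.2.2.1 * q.2.2.1 + p.2.2.2 * q.2.2.2

/-- `φ(t) = ∫₀ᵗ √(1 + x₁² − x₁'²)/(1 + x₁²) dσ` for the spherical-type rotational surface. -/
noncomputable def sphPhi (x₁ : ℝ → ℝ) (t : ℝ) : ℝ :=
  ∫ σ in (0:ℝ)..t, Real.sqrt (1 + x₁ σ ^ 2 - deriv x₁ σ ^ 2) / (1 + x₁ σ ^ 2)

/-- The rotational surface of spherical type
`X(t,θ) = (√(1+x₁²)·cosh φ, √(1+x₁²)·sinh φ, x₁ cos θ, x₁ sin θ)`. -/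
noncomputable def sphX (x₁ : ℝ → ℝ) (t θ : ℝ) : ℝ × ℝ × ℝ × ℝ :=
  (Real.sqrt (1 + x₁ t ^ 2) * Real.cosh (sphPhi x₁ t),
   Real.sqrt (1 + x₁ t ^ 2) * Real.sinh (sphPhi x₁ t),
   x₁ t * Real.cos θ, x₁ t * Real.sin θ)

/-- Key algebraic identity for `⟨∂X/∂t, ∂X/∂t⟩_L = 1`. -/
lemma sph_key (u u' sA sQ c sh co si : ℝ)
    (hsA : sA ^ 2 = 1 + u ^ 2) (hsQ : sQ ^ 2 = 1 + u ^ 2 - u' ^ 2)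
    (hch : c ^ 2 - sh ^ 2 = 1) (hsc : si ^ 2 + co ^ 2 = 1)
    (hsA0 : sA ≠ 0) (hA0 : (1 + u ^ 2) ≠ 0) :
    -((2 * u ^ 1 * u' / (2 * sA) * c + sA * (sh * (sQ / (1 + u ^ 2)))) *
        (2 * u ^ 1 * u' / (2 * sA) * c + sA * (sh * (sQ / (1 + u ^ 2))))) +
      (2 * u ^ 1 * u' / (2 * sA) * sh + sA * (c * (sQ / (1 + u ^ 2)))) *
        (2 * u ^ 1 * u' / (2 * sA) * sh + sA * (c * (sQ / (1 + u ^ 2)))) +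
      u' * co * (u' * co) + u' * si * (u' * si) = 1 := by
  have e1 : 2 * u ^ 1 * u' / (2 * sA) * c + sA * (sh * (sQ / (1 + u ^ 2)))
      = (u * u' * c + sh * sQ) / sA := by
    rw [← hsA]; field_simp
  have e2 : 2 * u ^ 1 * u' / (2 * sA) * sh + sA * (c * (sQ / (1 + u ^ 2)))
      = (u * u' * sh + c * sQ) / sA := by
    rw [← hsA]; field_simp
  have hAA : sA * sA = 1 + u ^ 2 := by nlinarith [hsA]
  rw [e1, e2, div_mul_div_comm, div_mul_div_comm, hAA]
  have hPR : -((u * u' * c + sh * sQ) * (u * u' * c + sh * sQ)) +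
      (u * u' * sh + c * sQ) * (u * u' * sh + c * sQ)
      = (1 - u' ^ 2) * (1 + u ^ 2) := by
    linear_combination (sQ ^ 2 - u ^ 2 * u' ^ 2) * hch + hsQ
  field_simp
  linear_combination hPR + u' ^ 2 * (1 + u ^ 2) * hsc

/-- The rotational surface of spherical type lies in `H³`, `t` is hyperbolic arc length,
and the induced first fundamental form is `diag(1, x₁²)`. -/
theorem stmt_6 (a b : ℝ) (h0 : (0:ℝ) ∈ Ioo a b) (x₁ : ℝ → ℝ)
    (hx₁ : ContDiffOn ℝ 2 x₁ (Ioo a b))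
    (hQ : ∀ t ∈ Ioo a b, 0 < 1 + x₁ t ^ 2 - deriv x₁ t ^ 2) :
    ∀ t ∈ Ioo a b, ∀ θ : ℝ,
      lor (sphX x₁ t θ) (sphX x₁ t θ) = -1 ∧
      0 < (sphX x₁ t θ).1 ∧
      lor (deriv (fun s => sphX x₁ s θ) t) (deriv (fun s => sphX x₁ s θ) t) = 1 ∧
      lor (deriv (fun s => sphX x₁ s θ) t) (deriv (fun ψ => sphX x₁ t ψ) θ) = 0 ∧
      lor (deriv (fun ψ => sphX x₁ t ψ) θ) (deriv (fun ψ => sphX x₁ t ψ) θ) = x₁ t ^ 2 := by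
  intro t ht θ
  have hA : (0:ℝ) < 1 + x₁ t ^ 2 := by positivity
  have hQt : 0 < 1 + x₁ t ^ 2 - deriv x₁ t ^ 2 := hQ t ht
  have hopen : Ioo a b ∈ nhds t := Ioo_mem_nhds ht.1 ht.2
  have hx₁d : HasDerivAt x₁ (deriv x₁ t) t :=
    ((hx₁.differentiableOn (by norm_num)).differentiableAt hopen).hasDerivAt
  -- continuity of the integrand of φ
  have hc1 : ContinuousOn x₁ (Ioo a b) := hx₁.continuousOn
  have hc2 : ContinuousOn (deriv x₁) (Ioo a b) :=
    hx₁.continuousOn_deriv_of_isOpen isOpen_Ioo (by norm_num)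
  have hgc : ContinuousOn
      (fun σ => Real.sqrt (1 + x₁ σ ^ 2 - deriv x₁ σ ^ 2) / (1 + x₁ σ ^ 2)) (Ioo a b) := by
    apply ContinuousOn.div
    · exact Real.continuous_sqrt.comp_continuousOn
        ((continuousOn_const.add (hc1.pow 2)).sub (hc2.pow 2))
    · exact continuousOn_const.add (hc1.pow 2)
    · intro σ _; positivity
  -- derivative of φ
  have hφd : HasDerivAt (sphPhi x₁)
      (Real.sqrt (1 + x₁ t ^ 2 - deriv x₁ t ^ 2) / (1 + x₁ t ^ 2)) t := by
    have hsub : uIcc 0 t ⊆ Ioo a b := Set.ordConnected_Ioo.uIcc_subset h0 ht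
    exact intervalIntegral.integral_hasDerivAt_right
      ((hgc.mono hsub).intervalIntegrable)
      (hgc.stronglyMeasurableAtFilter isOpen_Ioo t ht)
      (hgc.continuousAt hopen)
  -- derivative of √(1+x₁²)
  have hfA : HasDerivAt (fun s => 1 + x₁ s ^ 2) (2 * x₁ t ^ 1 * deriv x₁ t) t := by
    simpa using (hx₁d.pow 2).const_add 1
  have hs : HasDerivAt (fun s => Real.sqrt (1 + x₁ s ^ 2))
      (2 * x₁ t ^ 1 * deriv x₁ t / (2 * Real.sqrt (1 + x₁ t ^ 2))) t :=
    hfA.sqrt (ne_of_gt hA)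
  -- derivative of X in t
  have hD : HasDerivAt (fun s => sphX x₁ s θ)
      (2 * x₁ t ^ 1 * deriv x₁ t / (2 * Real.sqrt (1 + x₁ t ^ 2)) * Real.cosh (sphPhi x₁ t)
         + Real.sqrt (1 + x₁ t ^ 2) *
           (Real.sinh (sphPhi x₁ t) *
             (Real.sqrt (1 + x₁ t ^ 2 - deriv x₁ t ^ 2) / (1 + x₁ t ^ 2))),
       2 * x₁ t ^ 1 * deriv x₁ t / (2 * Real.sqrt (1 + x₁ t ^ 2)) * Real.sinh (sphPhi x₁ t)
         + Real.sqrt (1 + x₁ t ^ 2) *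
           (Real.cosh (sphPhi x₁ t) *
             (Real.sqrt (1 + x₁ t ^ 2 - deriv x₁ t ^ 2) / (1 + x₁ t ^ 2))),
       deriv x₁ t * Real.cos θ,
       deriv x₁ t * Real.sin θ) t :=
    HasDerivAt.prodMk (hs.mul hφd.cosh) (HasDerivAt.prodMk (hs.mul hφd.sinh)
      (HasDerivAt.prodMk (hx₁d.mul_const _) (hx₁d.mul_const _)))
  -- derivative of X in θ
  have hDθ : HasDerivAt (fun ψ => sphX x₁ t ψ)
      ((0:ℝ), (0:ℝ), x₁ t * -Real.sin θ, x₁ t * Real.cos θ) θ :=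
    HasDerivAt.prodMk (hasDerivAt_const θ _) (HasDerivAt.prodMk (hasDerivAt_const θ _)
      (HasDerivAt.prodMk ((Real.hasDerivAt_cos θ).const_mul (x₁ t))
        ((Real.hasDerivAt_sin θ).const_mul (x₁ t))))
  rw [hD.deriv, hDθ.deriv]
  have hsA : Real.sqrt (1 + x₁ t ^ 2) ^ 2 = 1 + x₁ t ^ 2 := Real.sq_sqrt hA.le
  have hsQ : Real.sqrt (1 + x₁ t ^ 2 - deriv x₁ t ^ 2) ^ 2 = 1 + x₁ t ^ 2 - deriv x₁ t ^ 2 :=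
    Real.sq_sqrt hQt.le
  have hch : Real.cosh (sphPhi x₁ t) ^ 2 - Real.sinh (sphPhi x₁ t) ^ 2 = 1 :=
    Real.cosh_sq_sub_sinh_sq _
  have hsc : Real.sin θ ^ 2 + Real.cos θ ^ 2 = 1 := Real.sin_sq_add_cos_sq θ
  have hsA0 : Real.sqrt (1 + x₁ t ^ 2) ≠ 0 := by positivity
  have hA0 : (1 + x₁ t ^ 2) ≠ 0 := ne_of_gt hA
  refine ⟨?_, ?_, ?_, ?_, ?_⟩
  · simp only [sphX, lor]
    nlinarith [hsA, hch, hsc]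
  · exact mul_pos (Real.sqrt_pos.2 hA) (Real.cosh_pos _)
  · simp only [lor]
    exact sph_key (x₁ t) (deriv x₁ t) _ _ _ _ _ _ hsA hsQ hch hsc hsA0 hA0
  · simp only [lor]; ring
  · simp only [lor]
    nlinarith [hsc]
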